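/- arXiv:0905.2674 — 2 statements merged into one kernel-verified Lean document; each statement's English description precedes it below -/
import Mathlib

section
/- Let K be a normal subgroup of a finite group G such that [x, K] is a normal subset of K for every small element x of G. Then [M(G), K] ≤ Z(G), i.e., every commutator of an element of M(G) with an element of K lies in the center of G. -/
open Pointwise
open scoped commutatorElement


/-- The size of the conjugacy class of `x` in `G`. -/
noncomputable def classCard {G : Type*} [Group G] (x : G) : ℕ := Nat.card (conjugatesOf x)

/-- An element `x` is *small* if its conjugacy class size is among the two smallest
conjugacy class sizes of `G`, i.e. at most one conjugacy class size is strictly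
smaller than that of `x`. -/
def IsSmall {G : Type*} [Group G] (x : G) : Prop :=
  {n : ℕ | (∃ g : G, classCard g = n) ∧ n < classCard x}.Subsingleton

/-- `M G` is the subgroup generated by all small elements of `G`. -/
def smallGen (G : Type*) [Group G] : Subgroup G := Subgroup.closure {x : G | IsSmall x}

/-- `[x, K] = {x⁻¹k⁻¹xk : k ∈ K}`. -/
def commSet {G : Type*} [Group G] (x : G) (K : Set G) : Set G :=
  {y | ∃ k ∈ K, y = x⁻¹ * k⁻¹ * x * k}

/-- `[A, x] = {a⁻¹x⁻¹ax : a ∈ A}`. -/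
def commSet' {G : Type*} [Group G] (A : Set G) (x : G) : Set G :=
  {y | ∃ a ∈ A, y = a⁻¹ * x⁻¹ * a * x}

/-- `S` is a normal subset of `K`: `k⁻¹Sk = S` for all `k ∈ K`. -/
def IsNormalSubsetOf {G : Type*} [Group G] (S K : Set G) : Prop :=
  ∀ k ∈ K, (fun s => k⁻¹ * s * k) '' S = S

/-- The Fitting subgroup: the join of all nilpotent normal subgroups (for a finite
group, its largest nilpotent normal subgroup). -/
def fittingSubgroup (G : Type*) [Group G] : Subgroup G :=
  ⨆ H ∈ {H : Subgroup G | H.Normal ∧ Group.IsNilpotent ↥H}, H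

theorem card_quot_eq_range {G : Type*} [Group G] (H : Subgroup G) {α : Type*} (f : G → α)
    (hf : ∀ g g' : G, f g = f g' ↔ g⁻¹ * g' ∈ H) :
    Nat.card (G ⧸ H) = Nat.card (Set.range f) := by
  apply Nat.card_congr
  refine Equiv.ofBijective (fun q => Quotient.liftOn' q (fun g => (⟨f g, g, rfl⟩ : Set.range f))
    (fun a b h => Subtype.ext ((hf a b).mpr (QuotientGroup.leftRel_apply.mp h)))) ⟨?_, ?_⟩
  · intro q q'
    induction q using Quotient.inductionOn'
    induction q' using Quotient.inductionOn'
    intro h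
    exact Quotient.sound' (QuotientGroup.leftRel_apply.mpr ((hf _ _).mp (congrArg Subtype.val h)))
  · rintro ⟨y, g, rfl⟩
    exact ⟨Quotient.mk'' g, rfl⟩

theorem conj_eq_iff {G : Type*} [Group G] (x g g' : G) :
    g * x * g⁻¹ = g' * x * g'⁻¹ ↔ x * (g⁻¹ * g') = (g⁻¹ * g') * x := by
  constructor
  · intro h
    have : x * g⁻¹ * g' = g⁻¹ * (g * x * g⁻¹) * g' := by group
    rw [h] at this
    simpa [mul_assoc] using this
  · intro h
    have h2 : g * (x * (g⁻¹ * g')) * g'⁻¹ = g * ((g⁻¹ * g') * x) * g'⁻¹ := by rw [h]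
    calc g * x * g⁻¹ = g * (x * (g⁻¹ * g')) * g'⁻¹ := by group
    _ = g * ((g⁻¹ * g') * x) * g'⁻¹ := h2
    _ = g' * x * g'⁻¹ := by group

theorem comm_eq_iff {G : Type*} [Group G] (x a b : G) :
    x⁻¹ * a * x * a⁻¹ = x⁻¹ * b * x * b⁻¹ ↔ x * (a⁻¹ * b) = (a⁻¹ * b) * x := by
  rw [← conj_eq_iff x a b]
  constructor
  · intro h
    calc a * x * a⁻¹ = x * (x⁻¹ * a * x * a⁻¹) := by group
    _ = x * (x⁻¹ * b * x * b⁻¹) := by rw [h]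
    _ = b * x * b⁻¹ := by group
  · intro h
    calc x⁻¹ * a * x * a⁻¹ = x⁻¹ * (a * x * a⁻¹) := by group
    _ = x⁻¹ * (b * x * b⁻¹) := by rw [h]
    _ = x⁻¹ * b * x * b⁻¹ := by group

theorem classCard_eq_index {G : Type*} [Group G] (x : G) :
    classCard x = (Subgroup.centralizer {x}).index := by
  have hr : conjugatesOf x = Set.range (fun g : G => g * x * g⁻¹) := by
    ext b
    simp only [Set.mem_range, conjugatesOf, Set.mem_setOf_eq, isConj_iff]
  rw [classCard, hr, Subgroup.index_eq_card,
    card_quot_eq_range (Subgroup.centralizer {x}) (fun g => g * x * g⁻¹) (fun g g' => by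
      rw [conj_eq_iff]
      simp [Subgroup.mem_centralizer_iff])]

theorem mem_center_of_classCard_eq_one {G : Type*} [Group G] [Finite G] {x : G}
    (h : classCard x = 1) : x ∈ Subgroup.center G := by
  rw [classCard, Nat.card_eq_one_iff_unique] at h
  rw [Subgroup.mem_center_iff]
  intro g
  have h1 : (⟨g * x * g⁻¹, isConj_iff.mpr ⟨g, rfl⟩⟩ : conjugatesOf x)
      = (⟨x, IsConj.refl x⟩ : conjugatesOf x) := h.1.elim _ _
  have h2 : g * x * g⁻¹ = x := congrArg Subtype.val h1
  calc g * x = g * x * g⁻¹ * g := by group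
  _ = x * g := by rw [h2]

theorem one_lt_classCard {G : Type*} [Group G] [Finite G] {x : G}
    (h : x ∉ Subgroup.center G) : 1 < classCard x := by
  rw [Subgroup.mem_center_iff] at h
  push_neg at h
  obtain ⟨g, hg⟩ := h
  have hne : g * x * g⁻¹ ≠ x := fun he => hg (by calc g * x = g * x * g⁻¹ * g := by group
    _ = x * g := by rw [he])
  have : Nontrivial (conjugatesOf x) :=
    ⟨⟨⟨g * x * g⁻¹, isConj_iff.mpr ⟨g, rfl⟩⟩, ⟨x, IsConj.refl x⟩, fun he =>
      hne (congrArg Subtype.val he)⟩⟩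
  exact Finite.one_lt_card

theorem classCard_one {G : Type*} [Group G] : classCard (1 : G) = 1 := by
  rw [classCard]
  have : conjugatesOf (1 : G) = {1} := by
    ext b; simp [conjugatesOf, isConj_iff, eq_comm]
  rw [this]
  simp [Nat.card_coe_set_eq]

/-- Core lemma: for a small `x`, every `[x,k]` with `k ∈ K` is central. -/
theorem comm_mem_center {G : Type*} [Group G] [Finite G] (K : Subgroup G) (hK : K.Normal)
    (x : G) (hx : IsSmall x) (hS : IsNormalSubsetOf (commSet x (K : Set G)) (K : Set G))
    {k : G} (hk : k ∈ K) : x⁻¹ * k⁻¹ * x * k ∈ Subgroup.center G := by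
  by_cases hxc : x ∈ Subgroup.center G
  · have h := (Subgroup.mem_center_iff.mp hxc k⁻¹).symm
    have : x⁻¹ * k⁻¹ * x * k = 1 := by
      calc x⁻¹ * k⁻¹ * x * k = x⁻¹ * (k⁻¹ * x) * k := by group
      _ = x⁻¹ * (x * k⁻¹) * k := by rw [← h]
      _ = 1 := by group
    rw [this]; exact one_mem _
  set s := x⁻¹ * k⁻¹ * x * k with hs_def
  by_cases hs1 : s = 1
  · rw [hs1]; exact one_mem _
  set S := commSet x (K : Set G) with hS_def
  set C := Subgroup.centralizer {x} with hC_def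
  set Cs := Subgroup.centralizer {s} with hCs_def
  set T := C ⊔ K with hT_def
  have h1S : (1 : G) ∈ S := ⟨1, one_mem K, by group⟩
  have hsS : s ∈ S := ⟨k, hk, rfl⟩
  -- conjugation by elements of T preserves S
  have hTS : ∀ t ∈ T, ∀ y ∈ S, t * y * t⁻¹ ∈ S := by
    intro t ht y hy
    have ht' : t ∈ (C : Set G) * (K : Set G) := by
      rw [← Subgroup.mul_normal C K]; exact ht
    obtain ⟨c, hc, k0, hk0, rfl⟩ := ht'
    have h1 : k0 * y * k0⁻¹ ∈ S := by
      have himg := hS k0⁻¹ (inv_mem hk0)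
      show k0 * y * k0⁻¹ ∈ S
      rw [← himg]
      exact ⟨y, hy, by group⟩
    obtain ⟨k1, hk1, hk1eq⟩ := h1
    have hcx : x * c = c * x := Subgroup.mem_centralizer_iff.mp hc x rfl
    have hphix : (MulAut.conj c) x = x := by
      rw [MulAut.conj_apply, ← hcx]; group
    refine ⟨(MulAut.conj c) k1, hK.conj_mem k1 hk1 c, ?_⟩
    have : c * k0 * y * (c * k0)⁻¹ = (MulAut.conj c) (k0 * y * k0⁻¹) := by
      rw [MulAut.conj_apply]; group
    rw [this, hk1eq]
    calc (MulAut.conj c) (x⁻¹ * k1⁻¹ * x * k1)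
        = ((MulAut.conj c) x)⁻¹ * ((MulAut.conj c) k1)⁻¹ * (MulAut.conj c) x
          * (MulAut.conj c) k1 := by
          simp only [map_mul, map_inv]
    _ = x⁻¹ * ((MulAut.conj c) k1)⁻¹ * x * (MulAut.conj c) k1 := by rw [hphix]
  -- |S| = relindex C K
  have hSK : C.relIndex K = Nat.card S := by
    have hr : Set.range (fun kk : ↥K => x⁻¹ * (kk : G) * x * (kk : G)⁻¹) = S := by
      ext y
      constructor
      · rintro ⟨kk, rfl⟩
        exact ⟨(kk : G)⁻¹, inv_mem kk.2, by group⟩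
      · rintro ⟨k0, hk0, rfl⟩
        exact ⟨⟨k0⁻¹, inv_mem hk0⟩, by push_cast; group⟩
    rw [Subgroup.relIndex, Subgroup.index_eq_card,
      card_quot_eq_range (C.subgroupOf K) (fun kk : ↥K => x⁻¹ * (kk : G) * x * (kk : G)⁻¹)
        (fun kk kk' => by
          rw [comm_eq_iff, Subgroup.mem_subgroupOf]
          have hcoe : ((kk⁻¹ * kk' : ↥K) : G) = (kk : G)⁻¹ * (kk' : G) := rfl
          rw [hcoe, hC_def]
          simp [Subgroup.mem_centralizer_iff]), hr]
  -- relindex Cs T = card of T-orbit of s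
  have hCsT : Cs.relIndex T = Nat.card (Set.range (fun t : ↥T => (t : G) * s * (t : G)⁻¹)) := by
    rw [Subgroup.relIndex, Subgroup.index_eq_card,
      card_quot_eq_range (Cs.subgroupOf T) (fun t : ↥T => (t : G) * s * (t : G)⁻¹)
        (fun t t' => by
          rw [conj_eq_iff, Subgroup.mem_subgroupOf]
          have hcoe : ((t⁻¹ * t' : ↥T) : G) = (t : G)⁻¹ * (t' : G) := rfl
          rw [hcoe, hCs_def]
          simp [Subgroup.mem_centralizer_iff])]
  -- the T-orbit is strictly inside S
  have horb : Set.range (fun t : ↥T => (t : G) * s * (t : G)⁻¹) ⊂ S := by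
    rw [Set.ssubset_def]
    constructor
    · rintro y ⟨t, rfl⟩
      exact hTS t t.2 s hsS
    · intro hsub
      obtain ⟨t, ht⟩ := hsub h1S
      have ht' : (t : G) * s * (t : G)⁻¹ = 1 := ht
      exact hs1 (by
        have : (t : G)⁻¹ * ((t : G) * s * (t : G)⁻¹) * (t : G) = (t : G)⁻¹ * 1 * (t : G) := by
          rw [ht']
        calc s = (t : G)⁻¹ * ((t : G) * s * (t : G)⁻¹) * (t : G) := by group
        _ = (t : G)⁻¹ * 1 * (t : G) := this
        _ = 1 := by group)
  have hcard_lt : Nat.card (Set.range (fun t : ↥T => (t : G) * s * (t : G)⁻¹)) < Nat.card S := by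
    rw [Nat.card_coe_set_eq, Nat.card_coe_set_eq]
    exact Set.ncard_lt_ncard horb (Set.toFinite _)
  -- index chain
  have hCleT : C ≤ T := le_sup_left
  have hKleT : K ≤ T := le_sup_right
  have hrelT_ne : C.relIndex T ≠ 0 := by
    rw [Subgroup.relIndex]; exact Subgroup.index_ne_zero_of_finite
  have e4 : Cs.relIndex T < C.relIndex T := by
    calc Cs.relIndex T < Nat.card S := by rw [hCsT]; exact hcard_lt
    _ = C.relIndex K := hSK.symm
    _ ≤ C.relIndex T := Subgroup.relIndex_le_of_le_right hKleT hrelT_ne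
  have key : Cs.index < C.index := by
    have pos : 0 < (Cs ⊓ T).index := Nat.pos_of_ne_zero Subgroup.index_ne_zero_of_finite
    have e1 : Cs.index ≤ (Cs ⊓ T).index :=
      Nat.le_of_dvd pos (Subgroup.index_dvd_of_le inf_le_left)
    have e2 : (Cs ⊓ T).index = Cs.relIndex T * T.index := by
      rw [← Subgroup.inf_relIndex_right Cs T]
      exact (Subgroup.relIndex_mul_index inf_le_right).symm
    have e3 : C.index = C.relIndex T * T.index := (Subgroup.relIndex_mul_index hCleT).symm
    calc Cs.index ≤ Cs.relIndex T * T.index := e1.trans (le_of_eq e2)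
    _ < C.relIndex T * T.index := by
        exact (Nat.mul_lt_mul_right (Nat.pos_of_ne_zero Subgroup.index_ne_zero_of_finite)).mpr e4
    _ = C.index := e3.symm
  have hlt : classCard s < classCard x := by
    rw [classCard_eq_index, classCard_eq_index]
    exact key
  have hone : classCard s = 1 :=
    hx ⟨⟨s, rfl⟩, hlt⟩ ⟨⟨(1 : G), classCard_one⟩, lt_of_le_of_lt (le_refl 1) (by
      have := one_lt_classCard hxc
      omega)⟩
  exact mem_center_of_classCard_eq_one hone

theorem classCard_inv {G : Type*} [Group G] (x : G) : classCard x⁻¹ = classCard x := by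
  rw [classCard_eq_index, classCard_eq_index]
  congr 1
  ext g
  simp only [Subgroup.mem_centralizer_iff, Set.mem_singleton_iff, forall_eq]
  constructor
  · intro h
    have := congrArg (fun z => x * z * x) h
    simpa [mul_assoc] using this.symm
  · intro h
    have := congrArg (fun z => x⁻¹ * z * x⁻¹) h
    simpa [mul_assoc] using this.symm

theorem isSmall_inv {G : Type*} [Group G] {x : G} (h : IsSmall x) : IsSmall x⁻¹ := by
  unfold IsSmall at h ⊢
  rw [classCard_inv]
  exact h

/-- Let `K` be a normal subgroup of a finite group `G` such that `[x, K]` is a normal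
subset of `K` for every small element `x` of `G`. Then `[M(G), K] ≤ Z(G)`. -/
theorem stmt_7 {G : Type*} [Group G] [Finite G] (K : Subgroup G) (hK : K.Normal)
    (hns : ∀ x : G, IsSmall x → IsNormalSubsetOf (commSet x (K : Set G)) (K : Set G)) :
    ⁅smallGen G, K⁆ ≤ Subgroup.center G := by
  have main : ∀ g ∈ Subgroup.closure {x : G | IsSmall x}, ∀ k' ∈ K,
      ⁅g, k'⁆ ∈ Subgroup.center G := by
    intro g hg
    induction hg using Subgroup.closure_induction with
    | mem x hx' =>
      intro k' hk'
      have hsm : IsSmall (x⁻¹ : G) := isSmall_inv hx'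
      have h := comm_mem_center K hK x⁻¹ hsm (hns x⁻¹ hsm) (inv_mem hk')
      have he : ⁅x, k'⁆ = (x⁻¹)⁻¹ * (k'⁻¹)⁻¹ * x⁻¹ * k'⁻¹ := by
        rw [commutatorElement_def]; group
      rw [he]; exact h
    | one =>
      intro k' hk'
      have h1 : ⁅(1 : G), k'⁆ = 1 := by rw [commutatorElement_def]; group
      rw [h1]; exact one_mem _
    | mul a b ha hb pa pb =>
      intro k' hk'
      have hzb := pb k' hk'
      have hza := pa k' hk'
      have hid : ⁅a * b, k'⁆ = a * ⁅b, k'⁆ * a⁻¹ * ⁅a, k'⁆ := by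
        simp only [commutatorElement_def]; group
      have hcomm : a * ⁅b, k'⁆ * a⁻¹ = ⁅b, k'⁆ := by
        have hz := Subgroup.mem_center_iff.mp hzb a
        calc a * ⁅b, k'⁆ * a⁻¹ = ⁅b, k'⁆ * a * a⁻¹ := by rw [hz]
        _ = ⁅b, k'⁆ := by group
      rw [hid, hcomm]
      exact mul_mem hzb hza
    | inv a ha pa =>
      intro k' hk'
      have hz := pa k' hk'
      have hid : ⁅a⁻¹, k'⁆ = a⁻¹ * ⁅a, k'⁆⁻¹ * a := by
        simp only [commutatorElement_def]; group
      have hcomm : a⁻¹ * ⁅a, k'⁆⁻¹ * a = ⁅a, k'⁆⁻¹ := by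
        have hzi := Subgroup.mem_center_iff.mp (inv_mem hz) a⁻¹
        calc a⁻¹ * ⁅a, k'⁆⁻¹ * a = ⁅a, k'⁆⁻¹ * a⁻¹ * a := by rw [hzi]
        _ = ⁅a, k'⁆⁻¹ := by group
      rw [hid, hcomm]
      exact inv_mem hz
  exact Subgroup.commutator_le.mpr fun g₁ h₁ g₂ h₂ => main g₁ h₁ g₂ h₂
end

section
/- Let K be a normal subgroup of a finite group G and let x be a small element of G such that [x, K] is a normal subset of K. Then [x, K] ⊆ Z(G), i.e., [x,k] lies in the center of G for every k ∈ K. -/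
section Auxiliary

open MulAction

variable {G : Type*} [Group G]

private lemma orbstab (M : Type*) [Group M] {β : Type*} [MulAction M β] (z : β) :
    Nat.card (orbit M z) * Nat.card (stabilizer M z) = Nat.card M := by
  rw [← Nat.card_prod]
  exact Nat.card_congr (orbitProdStabilizerEquivGroup M z)

private lemma orbit_conjAct_eq (g : G) : orbit (ConjAct G) g = conjugatesOf g := by
  ext h
  rw [ConjAct.mem_orbit_conjAct, isConj_comm]
  rfl

private lemma card_stab_conjAct (g : G) :
    Nat.card (stabilizer (ConjAct G) g) = Nat.card (Subgroup.centralizer ({g} : Set G)) := by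
  rw [Subgroup.centralizer_eq_comap_stabilizer]
  exact Nat.card_congr
    (Equiv.subtypeEquiv ConjAct.toConjAct.toEquiv (fun _ => Iff.rfl)).symm

private lemma classCard_mul_card_centralizer [Finite G] (g : G) :
    classCard g * Nat.card (Subgroup.centralizer ({g} : Set G)) = Nat.card G := by
  rw [classCard, ← orbit_conjAct_eq, ← card_stab_conjAct]
  rw [orbstab (ConjAct G) g]
  exact Nat.card_congr ConjAct.ofConjAct.toEquiv

private lemma classCard_eq_one_iff [Finite G] (g : G) :
    classCard g = 1 ↔ g ∈ Subgroup.center G := by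
  constructor
  · intro h1
    have hsub : Subsingleton (conjugatesOf g) := (Nat.card_eq_one_iff_unique.mp h1).1
    rw [Subgroup.mem_center_iff]
    intro h
    have hmem : h * g * h⁻¹ ∈ conjugatesOf g := isConj_iff.mpr ⟨h, rfl⟩
    have := hsub.elim ⟨h * g * h⁻¹, hmem⟩ ⟨g, mem_conjugatesOf_self⟩
    have h2 : h * g * h⁻¹ = g := congrArg Subtype.val this
    calc h * g = h * g * h⁻¹ * h := by group
    _ = g * h := by rw [h2]
  · intro hg
    have : conjugatesOf g = {g} := by
      ext b
      constructor
      · rintro hb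
        obtain ⟨c, rfl⟩ := isConj_iff.mp hb
        have hc := (Subgroup.mem_center_iff.mp hg) c
        rw [Set.mem_singleton_iff, hc]
        group
      · rintro rfl; exact mem_conjugatesOf_self
    rw [classCard, this]
    simp

end Auxiliary

open MulAction Pointwise in
/-- Let `K` be a normal subgroup of a finite group `G` and `x` a small element of `G`
such that `[x, K]` is a normal subset of `K`. Then `[x, K] ⊆ Z(G)`. -/
theorem stmt_8 {G : Type*} [Group G] [Finite G] (K : Subgroup G) (hK : K.Normal)
    (x : G) (hx : IsSmall x)
    (hns : IsNormalSubsetOf (commSet x (K : Set G)) (K : Set G)) :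
    commSet x (K : Set G) ⊆ (Subgroup.center G : Set G) := by
  intro y hy
  by_cases hxc : x ∈ Subgroup.center G
  · obtain ⟨k, hk, rfl⟩ := hy
    have hxk : k⁻¹ * x = x * k⁻¹ := (Subgroup.mem_center_iff.mp hxc) k⁻¹
    have h1 : x⁻¹ * k⁻¹ * x * k = 1 := by
      rw [mul_assoc x⁻¹ k⁻¹ x, hxk]
      group
    rw [h1]
    exact Subgroup.one_mem _
  by_contra hyc
  haveI : Finite (ConjAct G) := Finite.of_equiv G ConjAct.toConjAct.toEquiv
  set S : Set G := commSet x (K : Set G) with hSdef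
  have hyS : y ∈ S := hy
  have h1S : (1 : G) ∈ S := ⟨1, K.one_mem, by group⟩
  set C := Subgroup.centralizer ({x} : Set G) with hCdef
  set H := K ⊔ C with hHdef
  -- invariance of S under conjugation by K
  have hKinv : ∀ k ∈ K, ∀ s ∈ S, k⁻¹ * s * k ∈ S := by
    intro k hk s hs
    have h := hns k hk
    have hm := Set.mem_image_of_mem (fun s => k⁻¹ * s * k) hs
    rw [h] at hm
    exact hm
  -- invariance of S under conjugation by C
  have hCinv : ∀ c ∈ C, ∀ s ∈ S, c⁻¹ * s * c ∈ S := by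
    intro c hc s hs
    obtain ⟨k, hk, rfl⟩ := hs
    have hcomm : Commute c x := Subgroup.mem_centralizer_singleton_iff.mp hc
    have e1 : c⁻¹ * x⁻¹ = x⁻¹ * c⁻¹ := hcomm.inv_inv.eq
    have e2 : c⁻¹ * x * c = x := by
      rw [show c⁻¹ * x * c = c⁻¹ * (x * c) from by group, ← hcomm.eq]
      group
    refine ⟨c⁻¹ * k * c, by simpa using hK.conj_mem k hk c⁻¹, ?_⟩
    calc c⁻¹ * (x⁻¹ * k⁻¹ * x * k) * c
        = (c⁻¹ * x⁻¹) * (k⁻¹ * x * k * c) := by group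
      _ = (x⁻¹ * c⁻¹) * (k⁻¹ * x * k * c) := by rw [e1]
      _ = x⁻¹ * (c⁻¹ * k * c)⁻¹ * (c⁻¹ * x * c) * (c⁻¹ * k * c) := by group
      _ = x⁻¹ * (c⁻¹ * k * c)⁻¹ * x * (c⁻¹ * k * c) := by rw [e2]
  -- invariance of S under conjugation by H
  have hHinv : ∀ h ∈ H, ∀ s ∈ S, h⁻¹ * s * h ∈ S := by
    intro h hh s hs
    have hh' : h ∈ ((K : Set G) * (C : Set G)) := by
      rw [← Subgroup.normal_mul K C]; exact hh
    obtain ⟨k, hk, c, hc, hkc⟩ := hh'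
    rw [← hkc, show (k * c)⁻¹ * s * (k * c) = c⁻¹ * (k⁻¹ * s * k) * c from by group]
    exact hCinv c hc _ (hKinv k hk s hs)
  -- the conjugation action of H
  set Hc : Subgroup (ConjAct G) := Subgroup.comap ConjAct.ofConjAct.toMonoidHom H with hHcdef
  have hmemHc : ∀ g : ConjAct G, g ∈ Hc ↔ ConjAct.ofConjAct g ∈ H := fun g => Iff.rfl
  -- the H-orbit of y is contained in S
  have horbY : (orbit Hc y : Set G) ⊆ S := by
    rintro z ⟨⟨u, hu⟩, rfl⟩
    show ((⟨u, hu⟩ : Hc) • y) ∈ S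
    have hu' : (ConjAct.ofConjAct u)⁻¹ ∈ H := inv_mem ((hmemHc u).mp hu)
    have hval : (⟨u, hu⟩ : Hc) • y
        = ((ConjAct.ofConjAct u)⁻¹)⁻¹ * y * (ConjAct.ofConjAct u)⁻¹ := by
      rw [Subgroup.smul_def, ConjAct.smul_def]
      group
    rw [hval]
    exact hHinv _ hu' y hyS
  -- x⁻¹ • (H-orbit of x) = S
  have himg : (fun z => x⁻¹ * z) '' (orbit Hc x : Set G) = S := by
    apply Set.Subset.antisymm
    · rintro w ⟨z, ⟨⟨u, hu⟩, rfl⟩, rfl⟩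
      show x⁻¹ * ((⟨u, hu⟩ : Hc) • x) ∈ S
      have hval : (⟨u, hu⟩ : Hc) • x
          = ConjAct.ofConjAct u * x * (ConjAct.ofConjAct u)⁻¹ := by
        rw [Subgroup.smul_def, ConjAct.smul_def]
      have hu' : (ConjAct.ofConjAct u)⁻¹ ∈ ((K : Set G) * (C : Set G)) := by
        rw [← Subgroup.normal_mul K C]; exact inv_mem ((hmemHc u).mp hu)
      obtain ⟨k, hk, c, hc, hkc⟩ := hu'
      have hgeq : ConjAct.ofConjAct u = c⁻¹ * k⁻¹ := by
        rw [← inv_inv (ConjAct.ofConjAct u), ← hkc]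
        group
      have hcomm : Commute c x := Subgroup.mem_centralizer_singleton_iff.mp hc
      have e1 : x⁻¹ * c⁻¹ = c⁻¹ * x⁻¹ := hcomm.inv_inv.eq.symm
      rw [hval, hgeq]
      have key : x⁻¹ * (c⁻¹ * k⁻¹ * x * (c⁻¹ * k⁻¹)⁻¹)
          = c⁻¹ * (x⁻¹ * k⁻¹ * x * k) * c := by
        calc x⁻¹ * (c⁻¹ * k⁻¹ * x * (c⁻¹ * k⁻¹)⁻¹)
            = (x⁻¹ * c⁻¹) * (k⁻¹ * x * k * c) := by group
          _ = (c⁻¹ * x⁻¹) * (k⁻¹ * x * k * c) := by rw [e1]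
          _ = c⁻¹ * (x⁻¹ * k⁻¹ * x * k) * c := by group
      rw [key]
      exact hCinv c hc _ ⟨k, hk, rfl⟩
    · rintro s ⟨k, hk, rfl⟩
      have hmem : ConjAct.toConjAct k⁻¹ ∈ Hc := by
        rw [hmemHc]
        simpa using (le_sup_left : K ≤ H) (inv_mem hk)
      refine ⟨(⟨ConjAct.toConjAct k⁻¹, hmem⟩ : Hc) • x, ⟨⟨ConjAct.toConjAct k⁻¹, hmem⟩, rfl⟩, ?_⟩
      rw [Subgroup.smul_def, ConjAct.smul_def]
      simp only [ConjAct.ofConjAct_toConjAct]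
      group
  -- cardinality bookkeeping
  have hScard : Nat.card S = Nat.card (orbit Hc x) := by
    rw [← himg, Nat.card_coe_set_eq, Nat.card_coe_set_eq,
      Set.ncard_image_of_injective _ (mul_right_injective x⁻¹)]
  have hstabX : Nat.card (stabilizer Hc x) = Nat.card C := by
    refine Nat.card_congr ⟨fun u => ⟨ConjAct.ofConjAct u.1.1, ?_⟩,
      fun c => ⟨⟨ConjAct.toConjAct c.1, ?_⟩, ?_⟩, fun u => ?_, fun c => ?_⟩
    · rw [hCdef, Subgroup.mem_centralizer_singleton_iff]
      have h := u.2
      rw [mem_stabilizer_iff, Subgroup.smul_def, ConjAct.smul_def] at h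
      calc ConjAct.ofConjAct u.1.1 * x
          = ConjAct.ofConjAct u.1.1 * x * (ConjAct.ofConjAct u.1.1)⁻¹
            * ConjAct.ofConjAct u.1.1 := by group
        _ = x * ConjAct.ofConjAct u.1.1 := by rw [h]
    · rw [hmemHc]
      simpa using (le_sup_right : C ≤ H) c.2
    · rw [mem_stabilizer_iff, Subgroup.smul_def, ConjAct.smul_def]
      simp only [ConjAct.ofConjAct_toConjAct]
      have hc : c.1 * x = x * c.1 :=
        Subgroup.mem_centralizer_singleton_iff.mp (hCdef ▸ c.2)
      rw [hc]
      group
    · exact Subtype.ext (Subtype.ext (by simp))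
    · exact Subtype.ext (by simp)
  have hstabYle : Nat.card (stabilizer Hc y)
      ≤ Nat.card (Subgroup.centralizer ({y} : Set G)) := by
    refine Nat.card_le_card_of_injective
      (fun u => (⟨ConjAct.ofConjAct u.1.1, ?_⟩ : Subgroup.centralizer ({y} : Set G))) ?_
    · rw [Subgroup.mem_centralizer_singleton_iff]
      have h := u.2
      rw [mem_stabilizer_iff, Subgroup.smul_def, ConjAct.smul_def] at h
      calc ConjAct.ofConjAct u.1.1 * y
          = ConjAct.ofConjAct u.1.1 * y * (ConjAct.ofConjAct u.1.1)⁻¹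
            * ConjAct.ofConjAct u.1.1 := by group
        _ = y * ConjAct.ofConjAct u.1.1 := by rw [h]
    · intro u v huv
      have h' : ConjAct.ofConjAct u.1.1 = ConjAct.ofConjAct v.1.1 := by
        simpa using congrArg Subtype.val huv
      exact Subtype.ext (Subtype.ext (ConjAct.ofConjAct.injective h'))
  -- smallness facts
  have hb1 : classCard x ≠ 1 := fun h => hxc ((classCard_eq_one_iff x).mp h)
  haveI : Nonempty (conjugatesOf x) := ⟨⟨x, mem_conjugatesOf_self⟩⟩
  haveI : Nonempty (conjugatesOf y) := ⟨⟨y, mem_conjugatesOf_self⟩⟩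
  have hbpos : 0 < classCard x := Nat.card_pos
  have hab : classCard x ≤ classCard y := by
    by_contra hlt
    push_neg at hlt
    have h1mem : (1 : ℕ) ∈ {n : ℕ | (∃ g : G, classCard g = n) ∧ n < classCard x} :=
      ⟨⟨1, (classCard_eq_one_iff 1).mpr (Subgroup.one_mem _)⟩,
        lt_of_le_of_ne hbpos (Ne.symm hb1)⟩
    have hymem : classCard y ∈ {n : ℕ | (∃ g : G, classCard g = n) ∧ n < classCard x} :=
      ⟨⟨y, rfl⟩, hlt⟩
    exact hyc ((classCard_eq_one_iff y).mp (hx hymem h1mem))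
  -- the numerical argument
  have e1 : classCard y * Nat.card (Subgroup.centralizer ({y} : Set G)) = Nat.card G :=
    classCard_mul_card_centralizer y
  have e2 : classCard x * Nat.card C = Nat.card G := classCard_mul_card_centralizer x
  have e3 : Nat.card (orbit Hc y) * Nat.card (stabilizer Hc y)
      = Nat.card S * Nat.card C := by
    rw [orbstab Hc y, ← orbstab Hc x, hScard, hstabX]
  have h_o_le : Nat.card (orbit Hc y) ≤ Nat.card S :=
    Nat.card_mono (Set.toFinite S) horbY
  haveI : Nonempty (orbit Hc y) := ⟨⟨y, mem_orbit_self y⟩⟩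
  have hopos : 0 < Nat.card (orbit Hc y) := Nat.card_pos
  have hspos : 0 < Nat.card (stabilizer Hc y) := Nat.card_pos
  have h1 : Nat.card C ≤ Nat.card (stabilizer Hc y) := by
    have h := Nat.mul_le_mul_right (Nat.card C) h_o_le
    rw [← e3] at h
    exact Nat.le_of_mul_le_mul_left h hopos
  have h2 : classCard x * Nat.card (stabilizer Hc y) ≤ Nat.card G := by
    calc classCard x * Nat.card (stabilizer Hc y)
        ≤ classCard y * Nat.card (stabilizer Hc y) := Nat.mul_le_mul_right _ hab
      _ ≤ classCard y * Nat.card (Subgroup.centralizer ({y} : Set G)) :=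
          Nat.mul_le_mul_left _ hstabYle
      _ = Nat.card G := e1
  have h3 : Nat.card G ≤ classCard x * Nat.card (stabilizer Hc y) := by
    calc Nat.card G = classCard x * Nat.card C := e2.symm
      _ ≤ classCard x * Nat.card (stabilizer Hc y) := Nat.mul_le_mul_left _ h1
  have h4 : Nat.card (stabilizer Hc y) = Nat.card C :=
    Nat.eq_of_mul_eq_mul_left hbpos (le_antisymm (h2.trans e2.symm.le) (e2.le.trans h3))
  have h5 : Nat.card S ≤ Nat.card (orbit Hc y) := by
    have h : Nat.card S * Nat.card (stabilizer Hc y)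
        = Nat.card (orbit Hc y) * Nat.card (stabilizer Hc y) := by
      rw [e3, h4]
    exact le_of_eq (Nat.eq_of_mul_eq_mul_right hspos h)
  have horbeq : (orbit Hc y : Set G) = S := by
    refine Set.eq_of_subset_of_ncard_le horbY ?_ (Set.toFinite S)
    rw [← Nat.card_coe_set_eq, ← Nat.card_coe_set_eq]
    exact h5
  have h1orb : (1 : G) ∈ orbit Hc y := horbeq ▸ h1S
  obtain ⟨u, hu⟩ := MulAction.mem_orbit_iff.mp h1orb
  rw [Subgroup.smul_def, ConjAct.smul_def] at hu
  have hy1 : y = 1 := by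
    calc y = (ConjAct.ofConjAct u.1)⁻¹
        * (ConjAct.ofConjAct u.1 * y * (ConjAct.ofConjAct u.1)⁻¹)
        * ConjAct.ofConjAct u.1 := by group
      _ = 1 := by rw [hu]; group
  exact hyc (hy1 ▸ Subgroup.one_mem _)
end
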